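/- Let A and B be real symmetric n×n matrices and I the n×n identity. Then A, B, and I are simultaneously diagonalizable via congruence if and only if AB = BA. -/

import Mathlib

set_option maxHeartbeats 1000000

open Matrix

lemma iSup_subtype_ne_bot {ι : Type*} {α : Type*} [CompleteLattice α] (V : ι → α) :
    (⨆ i : {i // V i ≠ ⊥}, V i.1) = ⨆ i, V i := by
  refine le_antisymm (iSup_le fun i => le_iSup V i.1) (iSup_le fun i => ?_)
  by_cases hi : V i = ⊥
  · simp [hi]
  · exact le_iSup_of_le ⟨i, hi⟩ le_rfl

-- two diagonal matrices commute
lemma isDiag_mul_comm' {n : ℕ} {D E : Matrix (Fin n) (Fin n) ℝ}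
    (hD : D.IsDiag) (hE : E.IsDiag) : D * E = E * D := by
  ext i j
  simp only [Matrix.mul_apply]
  refine Finset.sum_congr rfl fun k _ => ?_
  rcases eq_or_ne i k with rfl | hik
  · rcases eq_or_ne i j with rfl | hij
    · ring
    · simp [hE hij, hD hij]
  · simp [hD hik, hE hik]

theorem stmt_8 (n : ℕ) (A B : Matrix (Fin n) (Fin n) ℝ)
    (hA : A.IsSymm) (hB : B.IsSymm) :
    (∃ P : Matrix (Fin n) (Fin n) ℝ, IsUnit P ∧
        (Pᵀ * A * P).IsDiag ∧ (Pᵀ * B * P).IsDiag ∧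
        (Pᵀ * (1 : Matrix (Fin n) (Fin n) ℝ) * P).IsDiag) ↔
      A * B = B * A := by
  constructor
  · rintro ⟨P, hP, h1, h2, h3⟩
    rw [Matrix.mul_one] at h3
    have hPd : IsUnit P.det := (Matrix.isUnit_iff_isUnit_det P).mp hP
    have hPTd : IsUnit Pᵀ.det := by rwa [Matrix.det_transpose]
    -- A and B expressed through P
    have hArec : A = Pᵀ⁻¹ * (Pᵀ * A * P) * P⁻¹ := by
      rw [Matrix.mul_assoc Pᵀ A P, Matrix.nonsing_inv_mul_cancel_left _ _ hPTd,
        Matrix.mul_nonsing_inv_cancel_right _ _ hPd]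
    have hBrec : B = Pᵀ⁻¹ * (Pᵀ * B * P) * P⁻¹ := by
      rw [Matrix.mul_assoc Pᵀ B P, Matrix.nonsing_inv_mul_cancel_left _ _ hPTd,
        Matrix.mul_nonsing_inv_cancel_right _ _ hPd]
    have hMd : (P⁻¹ * Pᵀ⁻¹).IsDiag := by
      obtain ⟨d, hd⟩ : ∃ d, Pᵀ * P = Matrix.diagonal d :=
        ⟨_, ((Matrix.isDiag_iff_diagonal_diag _).mp h3).symm⟩
      rw [← Matrix.mul_inv_rev, hd, Matrix.inv_diagonal]
      exact Matrix.isDiag_diagonal _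
    have key : (Pᵀ * A * P) * (P⁻¹ * Pᵀ⁻¹) * (Pᵀ * B * P)
        = (Pᵀ * B * P) * (P⁻¹ * Pᵀ⁻¹) * (Pᵀ * A * P) := by
      rw [isDiag_mul_comm' h1 hMd, Matrix.mul_assoc, isDiag_mul_comm' h1 h2,
        ← Matrix.mul_assoc, isDiag_mul_comm' hMd h2]
    calc A * B = (Pᵀ⁻¹ * (Pᵀ * A * P) * P⁻¹) * (Pᵀ⁻¹ * (Pᵀ * B * P) * P⁻¹) := by
          rw [← hArec, ← hBrec]
      _ = Pᵀ⁻¹ * ((Pᵀ * A * P) * (P⁻¹ * Pᵀ⁻¹) * (Pᵀ * B * P)) * P⁻¹ := by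
          simp only [Matrix.mul_assoc]
      _ = Pᵀ⁻¹ * ((Pᵀ * B * P) * (P⁻¹ * Pᵀ⁻¹) * (Pᵀ * A * P)) * P⁻¹ := by rw [key]
      _ = (Pᵀ⁻¹ * (Pᵀ * B * P) * P⁻¹) * (Pᵀ⁻¹ * (Pᵀ * A * P) * P⁻¹) := by
          simp only [Matrix.mul_assoc]
      _ = B * A := by rw [← hArec, ← hBrec]
  · intro h
    classical
    set A' : Module.End ℝ (EuclideanSpace ℝ (Fin n)) := Matrix.toEuclideanLin A with hA'def
    set B' : Module.End ℝ (EuclideanSpace ℝ (Fin n)) := Matrix.toEuclideanLin B with hB'def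
    have hAs : A'.IsSymmetric := by
      rw [hA'def, ← Matrix.isHermitian_iff_isSymmetric, Matrix.IsHermitian,
        Matrix.conjTranspose_eq_transpose_of_trivial]
      exact hA
    have hBs : B'.IsSymmetric := by
      rw [hB'def, ← Matrix.isHermitian_iff_isSymmetric, Matrix.IsHermitian,
        Matrix.conjTranspose_eq_transpose_of_trivial]
      exact hB
    have hcomm : Commute A' B' := by
      have : A' * B' = Matrix.toEuclideanLin (A * B) := by
        apply LinearMap.ext; intro x
        simp [hA'def, hB'def, Matrix.toEuclideanLin_apply, Matrix.mulVec_mulVec,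
          Module.End.mul_apply, Equiv.apply_symm_apply]
      have that : B' * A' = Matrix.toEuclideanLin (B * A) := by
        apply LinearMap.ext; intro x
        simp [hA'def, hB'def, Matrix.toEuclideanLin_apply, Matrix.mulVec_mulVec,
          Module.End.mul_apply, Equiv.apply_symm_apply]
      rw [Commute, SemiconjBy, this, that, h]
    set V : ℝ × ℝ → Submodule ℝ (EuclideanSpace ℝ (Fin n)) :=
      fun i => Module.End.eigenspace A' i.2 ⊓ Module.End.eigenspace B' i.1 with hVdef
    have hint : DirectSum.IsInternal V :=
      LinearMap.IsSymmetric.directSum_isInternal_of_commute hAs hBs hcomm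
    have hofam : OrthogonalFamily ℝ (fun i => V i) (fun i => (V i).subtypeₗᵢ) :=
      LinearMap.IsSymmetric.orthogonalFamily_eigenspace_inf_eigenspace hAs hBs
    haveI : Fintype {i : ℝ × ℝ // V i ≠ ⊥} :=
      hint.submodule_iSupIndep.fintypeNeBotOfFiniteDimensional
    have hint' : DirectSum.IsInternal (fun i : {i : ℝ × ℝ // V i ≠ ⊥} => V i.1) :=
      (DirectSum.isInternal_submodule_iff_iSupIndep_and_iSup_eq_top _).mpr
        ⟨hint.submodule_iSupIndep.comp Subtype.val_injective,
          (iSup_subtype_ne_bot V).trans hint.submodule_iSup_eq_top⟩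
    have hofam' : OrthogonalFamily ℝ (fun i : {i : ℝ × ℝ // V i ≠ ⊥} => V i)
        (fun i => (V i : Submodule ℝ (EuclideanSpace ℝ (Fin n))).subtypeₗᵢ) :=
      hofam.comp Subtype.val_injective
    have hn : Module.finrank ℝ (EuclideanSpace ℝ (Fin n)) = n := by simp
    let b := hint'.subordinateOrthonormalBasis hn hofam'
    set idx := fun a : Fin n => hint'.subordinateOrthonormalBasisIndex hn a hofam' with hidx
    have hmem : ∀ a, b a ∈ V (idx a).1 := fun a =>
      hint'.subordinateOrthonormalBasis_subordinate hn a hofam'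
    set ν : Fin n → ℝ := fun a => ((idx a : {i : ℝ × ℝ // V i ≠ ⊥}) : ℝ × ℝ).2 with hν
    set μ : Fin n → ℝ := fun a => ((idx a : {i : ℝ × ℝ // V i ≠ ⊥}) : ℝ × ℝ).1 with hμ
    have hbA : ∀ a, A' (b a) = ν a • b a := fun a =>
      Module.End.mem_eigenspace_iff.mp (hmem a).1
    have hbB : ∀ a, B' (b a) = μ a • b a := fun a =>
      Module.End.mem_eigenspace_iff.mp (hmem a).2
    set P : Matrix (Fin n) (Fin n) ℝ := Matrix.of fun i a => b a i with hPdef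
    have hPtP : Pᵀ * P = 1 := by
      ext a c
      have := b.orthonormal
      rw [orthonormal_iff_ite] at this
      have h2 := this a c
      simp only [PiLp.inner_apply, RCLike.inner_apply, starRingEnd_apply, star_trivial] at h2
      simp only [Matrix.mul_apply, Matrix.transpose_apply, hPdef, Matrix.of_apply,
        Matrix.one_apply]
      rw [← h2]
      exact Finset.sum_congr rfl fun _ _ => mul_comm _ _
    have hAP : A * P = P * Matrix.diagonal ν := by
      ext i a
      have : (A *ᵥ (b a : Fin n → ℝ)) i = ν a * b a i := by
        have h1 := congrFun (congrArg (WithLp.equiv 2 (Fin n → ℝ)) (hbA a)) i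
        simpa [hA'def, hB'def, Matrix.toEuclideanLin_apply] using h1
      rw [Matrix.mul_diagonal]
      simpa [hPdef, Matrix.mul_apply, Matrix.mulVec, dotProduct, mul_comm] using this
    have hBP : B * P = P * Matrix.diagonal μ := by
      ext i a
      have : (B *ᵥ (b a : Fin n → ℝ)) i = μ a * b a i := by
        have h1 := congrFun (congrArg (WithLp.equiv 2 (Fin n → ℝ)) (hbB a)) i
        simpa [hA'def, hB'def, Matrix.toEuclideanLin_apply] using h1
      rw [Matrix.mul_diagonal]
      simpa [hPdef, Matrix.mul_apply, Matrix.mulVec, dotProduct, mul_comm] using this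
    refine ⟨P, ?_, ?_, ?_, ?_⟩
    · rw [Matrix.isUnit_iff_isUnit_det]
      refine IsUnit.of_mul_eq_one Pᵀ.det ?_
      rw [← Matrix.det_mul, mul_eq_one_comm.mp hPtP, Matrix.det_one]
    · rw [Matrix.mul_assoc, hAP, ← Matrix.mul_assoc, hPtP, Matrix.one_mul]
      exact Matrix.isDiag_diagonal ν
    · rw [Matrix.mul_assoc, hBP, ← Matrix.mul_assoc, hPtP, Matrix.one_mul]
      exact Matrix.isDiag_diagonal μ
    · rw [Matrix.mul_one, hPtP]
      exact Matrix.isDiag_one
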